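/- Let s ≥ 2 and let H be an (s,s)-butterfly with centres (u0,u1). Then there exist a vertex y ∈ {y1,…,ys} and a path Q in the complete graph on V(H) whose vertex set is exactly V(H) ∖ {u1}, whose ends are u0 and y, and each of whose edges joins two vertices that are the ends of a path with exactly three edges in H (in particular, no edge of Q is an edge of H). -/

import Mathlib

/-!
The `(p, q)`-butterfly with centres `(u₀, u₁)`, realised as a graph on `ℕ` with
`u₀ = 0`, `u₁ = 1`, `u₂ = 2`, `u₃ = 3`, `u₄ = 4`, `u₅ = 5`, wing vertices
`xᵢ = 5 + i` (`1 ≤ i ≤ p`) and `yⱼ = 5 + p + j` (`1 ≤ j ≤ q`): its edges are those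
of the path `u₄u₂u₀u₁u₃u₅` together with the `u₀`-wing edges `u₀xᵢ` and the
`u₁`-wing edges `u₁yⱼ`.  Its vertex set is `{0, 1, …, 5 + p + q}`.
-/

namespace Butterfly

/-- The edges of the `(p, q)`-butterfly. -/
def butterflyEdges (p q : ℕ) : Set (Sym2 ℕ) :=
  {s(4, 2), s(2, 0), s(0, 1), s(1, 3), s(3, 5)} ∪
    {e | ∃ i : ℕ, 1 ≤ i ∧ i ≤ p ∧ e = s(0, 5 + i)} ∪
    {e | ∃ j : ℕ, 1 ≤ j ∧ j ≤ q ∧ e = s(1, 5 + p + j)}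

/-- The `(p, q)`-butterfly with centres `(0, 1)`, as a simple graph on `ℕ`. -/
def butterfly (p q : ℕ) : SimpleGraph ℕ :=
  SimpleGraph.fromEdgeSet (butterflyEdges p q)

/-- `x` and `y` are the two ends of a path with exactly three edges in `H`. -/
def Linked3 (H : SimpleGraph ℕ) (x y : ℕ) : Prop :=
  ∃ a b : ℕ, H.Adj x a ∧ H.Adj a b ∧ H.Adj b y ∧ x ≠ b ∧ a ≠ y ∧ x ≠ y

variable {p q : ℕ}

lemma adj01 : (butterfly p q).Adj 0 1 := by
  simp [butterfly, butterflyEdges, SimpleGraph.fromEdgeSet_adj]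
lemma adj02 : (butterfly p q).Adj 0 2 := by
  simp [butterfly, butterflyEdges, SimpleGraph.fromEdgeSet_adj, Sym2.eq_iff]
lemma adj24 : (butterfly p q).Adj 2 4 := by
  simp [butterfly, butterflyEdges, SimpleGraph.fromEdgeSet_adj, Sym2.eq_iff]
lemma adj13 : (butterfly p q).Adj 1 3 := by
  simp [butterfly, butterflyEdges, SimpleGraph.fromEdgeSet_adj, Sym2.eq_iff]
lemma adj35 : (butterfly p q).Adj 3 5 := by
  simp [butterfly, butterflyEdges, SimpleGraph.fromEdgeSet_adj, Sym2.eq_iff]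
lemma adj0x {i : ℕ} (h1 : 1 ≤ i) (h2 : i ≤ p) : (butterfly p q).Adj 0 (5 + i) := by
  simp only [butterfly, SimpleGraph.fromEdgeSet_adj, butterflyEdges]
  exact ⟨Or.inl (Or.inr ⟨i, h1, h2, rfl⟩), by omega⟩
lemma adj1y {j : ℕ} (h1 : 1 ≤ j) (h2 : j ≤ q) : (butterfly p q).Adj 1 (5 + p + j) := by
  simp only [butterfly, SimpleGraph.fromEdgeSet_adj, butterflyEdges]
  exact ⟨Or.inr ⟨j, h1, h2, rfl⟩, by omega⟩

-- Linked3 facts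
lemma L05 : Linked3 (butterfly p q) 0 5 :=
  ⟨1, 3, adj01, adj13, adj35, by omega, by omega, by omega⟩
lemma L5y {j : ℕ} (h1 : 1 ≤ j) (h2 : j ≤ q) : Linked3 (butterfly p q) 5 (5 + p + j) :=
  ⟨3, 1, adj35.symm, adj13.symm, adj1y h1 h2, by omega, by omega, by omega⟩
lemma Ly2 {j : ℕ} (h1 : 1 ≤ j) (h2 : j ≤ q) : Linked3 (butterfly p q) (5 + p + j) 2 :=
  ⟨1, 0, (adj1y h1 h2).symm, adj01.symm, adj02, by omega, by omega, by omega⟩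
lemma L23 : Linked3 (butterfly p q) 2 3 :=
  ⟨0, 1, adj02.symm, adj01, adj13, by omega, by omega, by omega⟩
lemma L3x {i : ℕ} (h1 : 1 ≤ i) (h2 : i ≤ p) : Linked3 (butterfly p q) 3 (5 + i) :=
  ⟨1, 0, adj13.symm, adj01.symm, adj0x h1 h2, by omega, by omega, by omega⟩
lemma Lx4 {i : ℕ} (h1 : 1 ≤ i) (h2 : i ≤ p) : Linked3 (butterfly p q) (5 + i) 4 :=
  ⟨0, 2, (adj0x h1 h2).symm, adj02, adj24, by omega, by omega, by omega⟩
lemma L4x {i : ℕ} (h1 : 1 ≤ i) (h2 : i ≤ p) : Linked3 (butterfly p q) 4 (5 + i) :=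
  ⟨2, 0, adj24.symm, adj02.symm, adj0x h1 h2, by omega, by omega, by omega⟩
lemma Lxy {i j : ℕ} (h1 : 1 ≤ i) (h2 : i ≤ p) (h3 : 1 ≤ j) (h4 : j ≤ q) :
    Linked3 (butterfly p q) (5 + i) (5 + p + j) :=
  ⟨0, 1, (adj0x h1 h2).symm, adj01, adj1y h3 h4, by omega, by omega, by omega⟩
lemma Lyx {i j : ℕ} (h1 : 1 ≤ i) (h2 : i ≤ p) (h3 : 1 ≤ j) (h4 : j ≤ q) :
    Linked3 (butterfly p q) (5 + p + j) (5 + i) :=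
  ⟨1, 0, (adj1y h3 h4).symm, adj01.symm, adj0x h1 h2, by omega, by omega, by omega⟩

/-- The interleaved tail `[x₂, y₁, x₃, y₂, …, x_{n+1}, y_n]`. -/
def tail (p n : ℕ) : List ℕ := (List.range n).flatMap fun i => [7 + i, 6 + p + i]

lemma tail_succ (n : ℕ) : tail p (n + 1) = tail p n ++ [7 + n, 6 + p + n] := by
  simp [tail, List.range_succ]

lemma mem_tail {x n : ℕ} : x ∈ tail p n ↔
    (7 ≤ x ∧ x < 7 + n) ∨ (6 + p ≤ x ∧ x < 6 + p + n) := by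
  simp only [tail, List.mem_flatMap, List.mem_range, List.mem_cons, List.mem_singleton,
    List.not_mem_nil, or_false]
  constructor
  · rintro ⟨i, hi, h | h⟩ <;> omega
  · rintro (⟨h1, h2⟩ | ⟨h1, h2⟩)
    · exact ⟨x - 7, by omega, Or.inl (by omega)⟩
    · exact ⟨x - 6 - p, by omega, Or.inr (by omega)⟩

lemma tail_nodup (hp : 2 ≤ p) {n : ℕ} (hn : n ≤ p - 1) : (tail p n).Nodup := by
  induction n with
  | zero => simp [tail]
  | succ m ih =>
    rw [tail_succ, List.nodup_append]
    refine ⟨ih (by omega), by simp; omega, ?_⟩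
    intro a ha
    rw [mem_tail] at ha
    intro b hb
    simp only [List.mem_cons, List.mem_singleton, List.not_mem_nil, or_false] at hb
    omega

lemma tail_chain (hp : 2 ≤ p) {n : ℕ} (h1 : 1 ≤ n) (hn : n ≤ p - 1) :
    (4 :: tail p n).Chain' (Linked3 (butterfly p p)) ∧
      (4 :: tail p n).getLast? = some (5 + p + n) := by
  induction n with
  | zero => omega
  | succ m ih =>
    rcases Nat.eq_zero_or_pos m with rfl | hm
    · constructor
      · have h7 : (7:ℕ) = 5 + 2 := rfl
        have h6 : 6 + p = 5 + p + 1 := by omega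
        show List.Chain' _ [4, 7, 6 + p]
        rw [h7, h6]
        refine List.isChain_cons_cons.2 ⟨?_, List.isChain_cons_cons.2 ⟨?_, List.isChain_singleton _⟩⟩
        · exact L4x (p := p) (q := p) (i := 2) (by omega) (by omega)
        · refine Lxy (p := p) (q := p) (i := 2) (j := 1) ?h1 ?h2 ?h3 ?h4 <;> omega
      · rw [tail_succ]; simp [tail]; omega
    · obtain ⟨ihc, ihl⟩ := ih hm (by omega)
      have heq : 4 :: tail p (m + 1) = (4 :: tail p m) ++ [7 + m, 6 + p + m] := by
        rw [tail_succ]; rfl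
      constructor
      · rw [heq]
        refine List.IsChain.append ihc ?_ ?_
        · refine List.isChain_cons_cons.2 ⟨?_, List.isChain_singleton _⟩
          have e1 : 7 + m = 5 + (m + 2) := by omega
          have e2 : 6 + p + m = 5 + p + (m + 1) := by omega
          rw [e1, e2]
          exact Lxy (p := p) (q := p) (i := m + 2) (j := m + 1) (by omega) (by omega) (by omega) (by omega)
        · intro x hx y hy
          rw [ihl] at hx
          simp only [List.head?] at hy
          obtain rfl : x = 5 + p + m := by simpa using hx.symm
          obtain rfl : y = 7 + m := by simpa using hy.symm
          have e1 : 7 + m = 5 + (m + 2) := by omega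
          rw [e1]
          exact Lyx (p := p) (q := p) (i := m + 2) (j := m) (by omega) (by omega) (by omega) (by omega)
      · rw [heq, List.getLast?_append]
        simp
        omega


/-- For `p ≥ 2` there are a vertex `y` of the `u₁`-wing of the `(p, p)`-butterfly `H`
and a path `Q` in the complete graph on `V(H)` that visits exactly the vertices of
`V(H) ∖ {u₁}`, has ends `u₀` and `y`, and each of whose edges joins two vertices
that are the ends of a path with exactly three edges in `H`. -/
theorem butterfly_spanning_path_u0_wing (p : ℕ) (hp : 2 ≤ p) :
    ∃ y : ℕ, 6 + p ≤ y ∧ y ≤ 5 + p + p ∧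
      ∃ l : List ℕ, l.Nodup ∧ l.toFinset = (Finset.range (6 + p + p)).erase 1 ∧
        l.head? = some 0 ∧ l.getLast? = some y ∧
        l.Chain' (Linked3 (butterfly p p)) := by
  obtain ⟨hc, hl⟩ := tail_chain (p := p) hp (n := p - 1) (by omega) le_rfl
  refine ⟨5 + p + (p - 1), by omega, by omega,
    [0, 5, 5 + p + p, 2, 3, 6] ++ (4 :: tail p (p - 1)), ?_, ?_, rfl, ?_, ?_⟩
  · rw [List.nodup_append]
    refine ⟨by simp; omega, ?_, ?_⟩
    · rw [List.nodup_cons]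
      exact ⟨fun h => by rw [mem_tail] at h; omega, tail_nodup hp le_rfl⟩
    · intro a ha
      simp only [List.mem_cons, List.not_mem_nil, or_false] at ha
      intro b hb
      simp only [List.mem_cons] at hb
      rcases hb with rfl | hb
      · omega
      · rw [mem_tail] at hb; omega
  · ext x
    simp only [List.toFinset_append, Finset.mem_union, List.mem_toFinset, List.mem_cons,
      List.not_mem_nil, or_false, mem_tail, Finset.mem_erase, Finset.mem_range]
    omega
  · rw [List.getLast?_append, hl]
    rfl
  · refine List.IsChain.append ?_ hc ?_
    · refine List.isChain_cons_cons.2 ⟨L05, ?_⟩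
      refine List.isChain_cons_cons.2 ⟨?_, ?_⟩
      · exact L5y (p := p) (q := p) (j := p) (by omega) le_rfl
      refine List.isChain_cons_cons.2 ⟨?_, ?_⟩
      · exact Ly2 (p := p) (q := p) (j := p) (by omega) le_rfl
      refine List.isChain_cons_cons.2 ⟨L23, ?_⟩
      refine List.isChain_cons_cons.2 ⟨?_, List.isChain_singleton _⟩
      · have e : (6 : ℕ) = 5 + 1 := rfl
        rw [e]
        exact L3x (p := p) (q := p) (i := 1) le_rfl (by omega)
    · intro x hx y hy
      obtain rfl : x = 6 := by simpa using hx.symm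
      obtain rfl : y = 4 := by simpa using hy.symm
      have e : (6 : ℕ) = 5 + 1 := rfl
      rw [e]
      exact Lx4 (p := p) (q := p) (i := 1) le_rfl (by omega)


end Butterfly
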